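/- Let F be a field, R = F[[s^3, s^4]] ⊆ F[[s]], and I a nonzero ideal of R with I·F[[s]] = s^n·F[[s]]. Then the minimal number of generators μ_R(I) is at most 3, and μ_R(I) = 3 if and only if I contains power series (in s) of orders n, n+1, and n+2; in that case I = s^n·F[[s]], I is integrally closed, and n ≥ 6. -/

import Mathlib

open Polynomial

/-- The content ideal of a polynomial: the ideal generated by its coefficients. -/
noncomputable def cont {R : Type*} [CommRing R] (p : R[X]) : Ideal R :=
  Ideal.span (Set.range p.coeff)

/-- The minimal number of generators of an ideal. -/
noncomputable def mug {R : Type*} [CommRing R] (I : Ideal R) : ℕ :=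
  sInf {n | ∃ x : Fin n → R, Ideal.span (Set.range x) = I}

/-- The Dedekind--Mertens number of a polynomial. -/
noncomputable def dmNumber (R : Type*) [CommRing R] (g : R[X]) : ℕ :=
  sInf {k | 0 < k ∧ ∀ f : R[X], cont (f * g) * cont f ^ (k - 1) = cont f ^ k * cont g}

/-- The polarized Dedekind--Mertens number of a polynomial. -/
noncomputable def polDmNumber (R : Type*) [CommRing R] (g : R[X]) : ℕ :=
  sInf {k | 0 < k ∧ ∀ f : Fin k → R[X],
    (∑ i, cont (f i * g) * ∏ j ∈ Finset.univ.erase i, cont (f j)) =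
      (∏ i, cont (f i)) * cont g}

/-- `x` is in the integral closure of the ideal `I`. -/
def memIntCl {R : Type*} [CommRing R] (I : Ideal R) (x : R) : Prop :=
  ∃ k : ℕ, 0 < k ∧ ∃ a : ℕ → R, (∀ i, 1 ≤ i → i ≤ k → a i ∈ I ^ i) ∧
    x ^ k + ∑ i ∈ Finset.Icc 1 k, a i * x ^ (k - i) = 0


section Aux

open PowerSeries

variable {F : Type*} [Field F]

private lemma coeff_mul_low (g x : PowerSeries F) {n : ℕ}
    (hx : ∀ i, i < n → PowerSeries.coeff (R := F) i x = 0) (k : ℕ) :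
    PowerSeries.coeff (R := F) (n + k) (g * x)
      = ∑ i ∈ Finset.range (k+1), PowerSeries.coeff (R := F) i g * PowerSeries.coeff (R := F) (n + k - i) x := by
  rw [PowerSeries.coeff_mul, Finset.Nat.sum_antidiagonal_eq_sum_range_succ_mk]
  symm
  apply Finset.sum_subset
  · intro i hi; simp only [Finset.mem_range] at hi ⊢; omega
  · intro i hi hni
    simp only [Finset.mem_range] at hi hni
    rw [hx (n + k - i) (by omega), mul_zero]

/-- The set of quotients by `x` of elements of an ideal `J` of `R`. -/
private def Gset (R : Subring (PowerSeries F)) (J : Ideal ↥R) (x : ↥R) : Set (PowerSeries F) :=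
  {g | ∃ w ∈ J, (w : PowerSeries F) = g * ↑x}

private lemma Gset.add {R : Subring (PowerSeries F)} {J : Ideal ↥R} {x : ↥R} {g₁ g₂ : PowerSeries F}
    (h₁ : g₁ ∈ Gset R J x) (h₂ : g₂ ∈ Gset R J x) : g₁ + g₂ ∈ Gset R J x := by
  obtain ⟨w₁, hw₁, e₁⟩ := h₁
  obtain ⟨w₂, hw₂, e₂⟩ := h₂
  exact ⟨w₁ + w₂, J.add_mem hw₁ hw₂, by push_cast [e₁, e₂]; ring⟩

private lemma Gset.neg {R : Subring (PowerSeries F)} {J : Ideal ↥R} {x : ↥R} {g : PowerSeries F}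
    (h : g ∈ Gset R J x) : -g ∈ Gset R J x := by
  obtain ⟨w, hw, e⟩ := h
  exact ⟨-w, J.neg_mem hw, by push_cast [e]; ring⟩

private lemma Gset.sub {R : Subring (PowerSeries F)} {J : Ideal ↥R} {x : ↥R} {g₁ g₂ : PowerSeries F}
    (h₁ : g₁ ∈ Gset R J x) (h₂ : g₂ ∈ Gset R J x) : g₁ - g₂ ∈ Gset R J x := by
  simpa [sub_eq_add_neg] using Gset.add h₁ (Gset.neg h₂)

private lemma Gset.smul {R : Subring (PowerSeries F)} {J : Ideal ↥R} {x : ↥R} {r g : PowerSeries F}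
    (hr : r ∈ R) (h : g ∈ Gset R J x) : r * g ∈ Gset R J x := by
  obtain ⟨w, hw, e⟩ := h
  refine ⟨⟨r, hr⟩ * w, J.mul_mem_left _ hw, ?_⟩
  have : ((⟨r, hr⟩ * w : ↥R) : PowerSeries F) = r * ↑w := rfl
  rw [this, e]; ring

private lemma Gset.one {R : Subring (PowerSeries F)} {J : Ideal ↥R} {x : ↥R}
    (hx : x ∈ J) : (1 : PowerSeries F) ∈ Gset R J x :=
  ⟨x, hx, (one_mul _).symm⟩

private lemma span_range_pad {A : Type*} [CommRing A] {k m : ℕ} (h : k ≤ m) (v : Fin k → A) :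
    ∃ w : Fin m → A, Ideal.span (Set.range w) = Ideal.span (Set.range v) := by
  refine ⟨fun i => if h' : (i : ℕ) < k then v ⟨i, h'⟩ else 0, ?_⟩
  apply le_antisymm
  · rw [Ideal.span_le]
    rintro _ ⟨i, rfl⟩
    by_cases h' : (i : ℕ) < k
    · simp only [dif_pos h']; exact Ideal.subset_span ⟨_, rfl⟩
    · simp only [dif_neg h']; exact (Ideal.span _).zero_mem
  · rw [Ideal.span_le]
    rintro _ ⟨j, rfl⟩
    have : v j = (fun i : Fin m => if h' : (i : ℕ) < k then v ⟨i, h'⟩ else 0)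
        ⟨(j : ℕ), lt_of_lt_of_le j.2 h⟩ := by simp
    rw [this]
    exact Ideal.subset_span ⟨_, rfl⟩

private lemma mug_le_of {A : Type*} [CommRing A] {I : Ideal A} {k : ℕ} (v : Fin k → A)
    (hv : Ideal.span (Set.range v) = I) : mug I ≤ k := by
  unfold mug
  exact Nat.sInf_le ⟨v, hv⟩

private lemma mug_eq_three {A : Type*} [CommRing A] {I : Ideal A}
    (h3 : ∃ v : Fin 3 → A, Ideal.span (Set.range v) = I)
    (h2 : ¬ ∃ v : Fin 2 → A, Ideal.span (Set.range v) = I) : mug I = 3 := by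
  unfold mug
  apply le_antisymm (Nat.sInf_le h3)
  refine le_csInf ⟨3, h3⟩ ?_
  rintro m ⟨v, hv⟩
  by_contra hm
  push_neg at hm
  obtain ⟨w, hw⟩ := span_range_pad (show m ≤ 2 by omega) v
  exact h2 ⟨w, hw.trans hv⟩

end Aux

set_option maxHeartbeats 2000000 in
set_option synthInstance.maxHeartbeats 400000 in
theorem mug_ideal_s3s4 {F : Type*} [Field F] (R : Subring (PowerSeries F))
    (hR : ∀ f : PowerSeries F, f ∈ R ↔
      PowerSeries.coeff (R := F) 1 f = 0 ∧ PowerSeries.coeff (R := F) 2 f = 0 ∧ PowerSeries.coeff (R := F) 5 f = 0)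
    (I : Ideal ↥R) (hI : I ≠ ⊥) (n : ℕ)
    (hmap : Ideal.map R.subtype I = Ideal.span {(PowerSeries.X : PowerSeries F) ^ n}) :
    mug I ≤ 3 ∧
    (mug I = 3 ↔
      ((∃ x ∈ I, (x : PowerSeries F).order = (n : ℕ∞)) ∧
       (∃ x ∈ I, (x : PowerSeries F).order = ((n + 1 : ℕ) : ℕ∞)) ∧
       (∃ x ∈ I, (x : PowerSeries F).order = ((n + 2 : ℕ) : ℕ∞)))) ∧
    (mug I = 3 →
      ((∀ f ∈ Ideal.span {(PowerSeries.X : PowerSeries F) ^ n}, ∃ x ∈ I, (x : PowerSeries F) = f) ∧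
       I = Ideal.comap R.subtype (Ideal.map R.subtype I) ∧
       6 ≤ n)) := by
  classical
  have hmemR' : ∀ f : PowerSeries F, PowerSeries.coeff (R := F) 1 f = 0 → PowerSeries.coeff (R := F) 2 f = 0 →
      PowerSeries.coeff (R := F) 5 f = 0 → f ∈ R := fun f a b c => (hR f).mpr ⟨a, b, c⟩
  have hCmem : ∀ a : F, (PowerSeries.C (R := F) a) ∈ R := by
    intro a
    refine hmemR' _ ?_ ?_ ?_ <;> simp [PowerSeries.coeff_C]
  have hXpow : ∀ k : ℕ, k ≠ 1 → k ≠ 2 → k ≠ 5 → (PowerSeries.X ^ k : PowerSeries F) ∈ R := by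
    intro k h1 h2 h5
    refine hmemR' _ ?_ ?_ ?_ <;> rw [PowerSeries.coeff_X_pow, if_neg (by omega)]
  -- low coefficients of elements of I vanish
  have hlow : ∀ w : ↥R, w ∈ I → ∀ i, i < n → PowerSeries.coeff (R := F) i (↑w : PowerSeries F) = 0 := by
    intro w hw i hi
    have h1 : (↑w : PowerSeries F) ∈ Ideal.map R.subtype I := Ideal.mem_map_of_mem _ hw
    rw [hmap, Ideal.mem_span_singleton] at h1
    exact PowerSeries.X_pow_dvd_iff.mp h1 i hi
  -- there is an element of order exactly n
  have hxex : ∃ x : ↥R, x ∈ I ∧ PowerSeries.coeff (R := F) n (↑x : PowerSeries F) ≠ 0 := by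
    have hXn : (PowerSeries.X ^ n : PowerSeries F) ∈ Ideal.map R.subtype I := by
      rw [hmap]; exact Ideal.subset_span rfl
    have hmapdef : Ideal.map R.subtype I = Ideal.span (⇑R.subtype '' ↑I) := rfl
    rw [hmapdef] at hXn
    have key : ∀ f : PowerSeries F, f ∈ Ideal.span (⇑R.subtype '' ↑I) →
        ((∀ i, i ≤ n → PowerSeries.coeff (R := F) i f = 0) ∨
        ∃ x : ↥R, x ∈ I ∧ PowerSeries.coeff (R := F) n (↑x : PowerSeries F) ≠ 0) := by
      intro f hf
      induction hf using Submodule.span_induction with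
      | mem f hf =>
        obtain ⟨w, hwI, rfl⟩ := hf
        by_cases hn : PowerSeries.coeff (R := F) n (R.subtype w) = 0
        · left
          intro i hi
          rcases lt_or_eq_of_le hi with h | h
          · exact hlow w hwI i h
          · rw [h]; exact hn
        · right; exact ⟨w, hwI, hn⟩
      | zero => left; simp
      | add f g _ _ hf hg =>
        rcases hf with hf | hf
        · rcases hg with hg | hg
          · left; intro i hi; simp [hf i hi, hg i hi]
          · right; exact hg
        · right; exact hf
      | smul a f _ hf =>
        rcases hf with hf | hf
        · left
          intro i hi
          rw [smul_eq_mul, PowerSeries.coeff_mul]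
          apply Finset.sum_eq_zero
          rintro ⟨p, q⟩ hpq
          rw [Finset.HasAntidiagonal.mem_antidiagonal] at hpq
          rw [hf q (by omega), mul_zero]
        · right; exact hf
    rcases key _ hXn with h | h
    · exfalso
      have h1 := h n le_rfl
      rw [PowerSeries.coeff_X_pow, if_pos rfl] at h1
      exact one_ne_zero h1
    · exact h
  obtain ⟨x, hxI, hxn⟩ := hxex
  have hordx : (↑x : PowerSeries F).order = (n : ℕ∞) := by
    rw [PowerSeries.order_eq_nat]; exact ⟨hxn, hlow x hxI⟩
  have hsum0 : ∀ (g : PowerSeries F) (k : ℕ), (∀ i, i < k → PowerSeries.coeff (R := F) i g = 0) →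
      PowerSeries.coeff (R := F) (n+k) (g * (↑x : PowerSeries F))
        = PowerSeries.coeff (R := F) k g * PowerSeries.coeff (R := F) n (↑x : PowerSeries F) := by
    intro g k hg
    rw [coeff_mul_low g _ (hlow x hxI) k, Finset.sum_eq_single k]
    · simp
    · intro i hi hne
      simp only [Finset.mem_range] at hi
      rw [hg i (by omega), zero_mul]
    · intro h; exact absurd (Finset.self_mem_range_succ k) h
  -- division by x
  have hdiv : ∀ f : PowerSeries F, (∀ i, i < n → PowerSeries.coeff (R := F) i f = 0) →
      ∃ g : PowerSeries F, f = g * (↑x : PowerSeries F) := by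
    obtain ⟨v, hv⟩ := PowerSeries.X_pow_dvd_iff.mpr (hlow x hxI)
    have hv0 : PowerSeries.constantCoeff (R := F) v ≠ 0 := by
      intro h0
      apply hxn
      rw [hv]
      have := PowerSeries.coeff_X_pow_mul v n 0
      rw [zero_add] at this
      rw [this, ← PowerSeries.coeff_zero_eq_constantCoeff_apply] at *
      exact h0
    have hu : IsUnit v := PowerSeries.isUnit_iff_constantCoeff.mpr (isUnit_iff_ne_zero.mpr hv0)
    obtain ⟨u, rfl⟩ := hu
    intro f hf
    obtain ⟨h, hh⟩ := PowerSeries.X_pow_dvd_iff.mpr hf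
    refine ⟨h * (↑u⁻¹ : (PowerSeries F)ˣ), ?_⟩
    rw [hh, hv]
    calc (PowerSeries.X : PowerSeries F)^n * h
        = PowerSeries.X^n * (h * ((↑u⁻¹ : PowerSeries F) * ↑u)) := by
          rw [Units.inv_mul, mul_one]
      _ = h * (↑u⁻¹ : PowerSeries F) * (PowerSeries.X^n * ↑u) := by ring
  -- order from quotient coefficients
  have hmk : ∀ w : ↥R, w ∈ I → ∀ g : PowerSeries F, (↑w : PowerSeries F) = g * ↑x →
      ∀ k : ℕ, (∀ i, i < k → PowerSeries.coeff (R := F) i g = 0) → PowerSeries.coeff (R := F) k g ≠ 0 →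
      (↑w : PowerSeries F).order = ((n + k : ℕ) : ℕ∞) := by
    intro w hw g hg k hgl hgk
    rw [PowerSeries.order_eq_nat]
    constructor
    · rw [hg, hsum0 g k hgl]
      exact mul_ne_zero hgk hxn
    · intro i hi
      by_cases hin : i < n
      · exact hlow w hw i hin
      · obtain ⟨j, rfl, hj⟩ : ∃ j, i = n + j ∧ j < k := ⟨i - n, by omega, by omega⟩
        rw [hg, hsum0 g j (fun i hij => hgl i (by omega)), hgl j hj, zero_mul]
  have hext : ∀ w : ↥R, w ∈ I → ∀ g : PowerSeries F, (↑w : PowerSeries F) = g * ↑x →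
      ∀ k : ℕ, (↑w : PowerSeries F).order = ((n + k : ℕ) : ℕ∞) →
      (∀ i, i < k → PowerSeries.coeff (R := F) i g = 0) ∧ PowerSeries.coeff (R := F) k g ≠ 0 := by
    intro w hw g hg k hord
    rw [PowerSeries.order_eq_nat] at hord
    obtain ⟨hne, hzero⟩ := hord
    have hl : ∀ j, j < k → PowerSeries.coeff (R := F) j g = 0 := by
      intro j
      induction j using Nat.strong_induction_on with
      | _ j ih =>
        intro hjk
        have h0 : PowerSeries.coeff (R := F) (n+j) (↑w : PowerSeries F) = 0 := hzero _ (by omega)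
        rw [hg, hsum0 g j (fun i hij => ih i hij (by omega))] at h0
        exact (mul_eq_zero.mp h0).resolve_right hxn
    refine ⟨hl, fun h0 => hne ?_⟩
    rw [hg, hsum0 g k hl, h0, zero_mul]
  have hGwit : ∀ w : ↥R, w ∈ I → ∃ g, (↑w : PowerSeries F) = g * ↑x ∧ g ∈ Gset R I x := by
    intro w hw
    obtain ⟨g, hg⟩ := hdiv ↑w (hlow w hw)
    exact ⟨g, hg, w, hw, hg⟩
  have hIeqJ : ∀ J : Ideal ↥R, J ≤ I → (∀ g, g ∈ Gset R I x → g ∈ Gset R J x) → I = J := by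
    intro J hJI hGG
    refine le_antisymm ?_ hJI
    intro w hw
    obtain ⟨g, hg, hgG⟩ := hGwit w hw
    obtain ⟨w', hw', he⟩ := hGG g hgG
    have hww : w' = w := Subtype.ext (by rw [he, hg])
    rwa [← hww]
  have hRG : ∀ J : Ideal ↥R, x ∈ J → ∀ r : PowerSeries F, r ∈ R → r ∈ Gset R J x := by
    intro J hxJ r hr
    have := Gset.smul hr (Gset.one hxJ)
    rwa [mul_one] at this
  have hrho : ∀ g : PowerSeries F,
      g - PowerSeries.C (R := F) (PowerSeries.coeff (R := F) 1 g) * PowerSeries.X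
        - PowerSeries.C (R := F) (PowerSeries.coeff (R := F) 2 g) * PowerSeries.X ^ 2
        - PowerSeries.C (R := F) (PowerSeries.coeff (R := F) 5 g) * PowerSeries.X ^ 5 ∈ R := by
    intro g
    refine hmemR' _ ?_ ?_ ?_ <;>
      simp [PowerSeries.coeff_X_pow, PowerSeries.coeff_C_mul, PowerSeries.coeff_X]
  have hNo : ∀ k : ℕ, (¬ ∃ w ∈ I, (↑w : PowerSeries F).order = ((n + k : ℕ) : ℕ∞)) →
      ∀ g, g ∈ Gset R I x → (∀ i, i < k → PowerSeries.coeff (R := F) i g = 0) →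
      PowerSeries.coeff (R := F) k g = 0 := by
    intro k hk g hg hgl
    by_contra h
    obtain ⟨w, hw, he⟩ := hg
    exact hk ⟨w, hw, hmk w hw g he k hgl h⟩
  have hsubC : ∀ g : PowerSeries F, g ∈ Gset R I x →
      g - PowerSeries.C (R := F) (PowerSeries.coeff (R := F) 0 g) ∈ Gset R I x := by
    intro g hg
    exact Gset.sub hg (hRG I hxI _ (hCmem _))
  
  -- the chain producing X^5 and X^2 from an order-(n+2) quotient
  have hz_chain : ∀ J : Ideal ↥R, x ∈ J → ∀ z : ↥R, z ∈ J → ∀ gz : PowerSeries F,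
      (↑z : PowerSeries F) = gz * ↑x →
      PowerSeries.coeff (R := F) 1 gz = 0 → PowerSeries.coeff (R := F) 2 gz ≠ 0 →
      (PowerSeries.X ^ 5 : PowerSeries F) ∈ Gset R J x ∧
      (PowerSeries.X ^ 2 : PowerSeries F) ∈ Gset R J x := by
    intro J hxJ z hzJ gz hgz hc1 hc2
    have hgzJ : gz ∈ Gset R J x := ⟨z, hzJ, hgz⟩
    have h5G : (PowerSeries.X ^ 5 : PowerSeries F) ∈ Gset R J x := by
      have hrho5 : PowerSeries.X ^ 3 * gz
          - PowerSeries.C (R := F) (PowerSeries.coeff (R := F) 2 gz) * PowerSeries.X ^ 5 ∈ R := by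
        refine hmemR' _ ?_ ?_ ?_ <;>
          simp [PowerSeries.coeff_X_pow_mul', PowerSeries.coeff_C_mul, PowerSeries.coeff_X_pow]
      have m1 := Gset.sub
        (Gset.smul (hXpow 3 (by norm_num) (by norm_num) (by norm_num)) hgzJ)
        (hRG J hxJ _ hrho5)
      rw [show PowerSeries.X ^ 3 * gz - (PowerSeries.X ^ 3 * gz
          - PowerSeries.C (R := F) (PowerSeries.coeff (R := F) 2 gz) * PowerSeries.X ^ 5)
          = PowerSeries.C (R := F) (PowerSeries.coeff (R := F) 2 gz) * PowerSeries.X ^ 5 from by ring] at m1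
      have m2 := Gset.smul (hCmem (PowerSeries.coeff (R := F) 2 gz)⁻¹) m1
      rwa [← mul_assoc, ← map_mul, inv_mul_cancel₀ hc2, map_one, one_mul] at m2
    refine ⟨h5G, ?_⟩
    have hrho2 : gz - PowerSeries.C (R := F) (PowerSeries.coeff (R := F) 2 gz) * PowerSeries.X ^ 2
        - PowerSeries.C (R := F) (PowerSeries.coeff (R := F) 5 gz) * PowerSeries.X ^ 5 ∈ R := by
      refine hmemR' _ ?_ ?_ ?_ <;>
        simp [PowerSeries.coeff_C_mul, PowerSeries.coeff_X_pow, hc1]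
    have m1 := Gset.sub (Gset.sub hgzJ (hRG J hxJ _ hrho2))
      (Gset.smul (hCmem (PowerSeries.coeff (R := F) 5 gz)) h5G)
    rw [show gz - (gz - PowerSeries.C (R := F) (PowerSeries.coeff (R := F) 2 gz) * PowerSeries.X ^ 2
        - PowerSeries.C (R := F) (PowerSeries.coeff (R := F) 5 gz) * PowerSeries.X ^ 5)
        - PowerSeries.C (R := F) (PowerSeries.coeff (R := F) 5 gz) * PowerSeries.X ^ 5
        = PowerSeries.C (R := F) (PowerSeries.coeff (R := F) 2 gz) * PowerSeries.X ^ 2 from by ring] at m1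
    have m2 := Gset.smul (hCmem (PowerSeries.coeff (R := F) 2 gz)⁻¹) m1
    rwa [← mul_assoc, ← map_mul, inv_mul_cancel₀ hc2, map_one, one_mul] at m2
  have hordR : ∀ (w : ↥R) (k : ℕ), (↑w : PowerSeries F).order = (k : ℕ∞) →
      k ≠ 1 ∧ k ≠ 2 ∧ k ≠ 5 := by
    intro w k hw
    obtain ⟨hk, -⟩ := PowerSeries.order_eq_nat.mp hw
    obtain ⟨c1, c2, c5⟩ := (hR ↑w).mp w.2
    refine ⟨?_, ?_, ?_⟩ <;> rintro rfl
    exacts [hk c1, hk c2, hk c5]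
  
  have caseA : (∃ y ∈ I, (↑y : PowerSeries F).order = ((n + 1 : ℕ) : ℕ∞)) →
      (∃ z ∈ I, (↑z : PowerSeries F).order = ((n + 2 : ℕ) : ℕ∞)) →
      (∃ v : Fin 3 → ↥R, Ideal.span (Set.range v) = I) ∧
      (∀ f : PowerSeries F, (∀ i, i < n → PowerSeries.coeff (R := F) i f = 0) →
        ∃ w ∈ I, (↑w : PowerSeries F) = f) ∧
      6 ≤ n ∧ ¬ ∃ v : Fin 2 → ↥R, Ideal.span (Set.range v) = I := by
    rintro ⟨y, hyI, hordy⟩ ⟨z, hzI, hordz⟩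
    obtain ⟨gy, hgy⟩ := hdiv ↑y (hlow y hyI)
    obtain ⟨gz, hgz⟩ := hdiv ↑z (hlow z hzI)
    obtain ⟨hylow, hy1⟩ := hext y hyI gy hgy 1 hordy
    obtain ⟨hzlow, hz2⟩ := hext z hzI gz hgz 2 hordz
    have h6 : 6 ≤ n := by
      obtain ⟨a1, a2, a5⟩ := hordR x n hordx
      obtain ⟨b1, b2, b5⟩ := hordR y (n+1) hordy
      obtain ⟨c1, c2, c5⟩ := hordR z (n+2) hordz
      omega
    have hxJ : x ∈ Ideal.span {x, y, z} := Ideal.subset_span (by simp)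
    have hyJ : y ∈ Ideal.span {x, y, z} := Ideal.subset_span (by simp)
    have hzJ : z ∈ Ideal.span {x, y, z} := Ideal.subset_span (by simp)
    obtain ⟨h5G, h2G⟩ := hz_chain (Ideal.span {x, y, z}) hxJ z hzJ gz hgz
      (hzlow 1 (by norm_num)) hz2
    have hgyJ : gy ∈ Gset R (Ideal.span {x, y, z}) x := ⟨y, hyJ, hgy⟩
    have h1G : (PowerSeries.X : PowerSeries F) ∈ Gset R (Ideal.span {x, y, z}) x := by
      have m1 := Gset.sub (Gset.sub (Gset.sub hgyJ (hRG _ hxJ _ (hrho gy)))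
        (Gset.smul (hCmem (PowerSeries.coeff (R := F) 2 gy)) h2G))
        (Gset.smul (hCmem (PowerSeries.coeff (R := F) 5 gy)) h5G)
      rw [show gy - (gy - PowerSeries.C (R := F) (PowerSeries.coeff (R := F) 1 gy) * PowerSeries.X
          - PowerSeries.C (R := F) (PowerSeries.coeff (R := F) 2 gy) * PowerSeries.X ^ 2
          - PowerSeries.C (R := F) (PowerSeries.coeff (R := F) 5 gy) * PowerSeries.X ^ 5)
          - PowerSeries.C (R := F) (PowerSeries.coeff (R := F) 2 gy) * PowerSeries.X ^ 2
          - PowerSeries.C (R := F) (PowerSeries.coeff (R := F) 5 gy) * PowerSeries.X ^ 5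
          = PowerSeries.C (R := F) (PowerSeries.coeff (R := F) 1 gy) * PowerSeries.X from by ring] at m1
      have m2 := Gset.smul (hCmem (PowerSeries.coeff (R := F) 1 gy)⁻¹) m1
      rwa [← mul_assoc, ← map_mul, inv_mul_cancel₀ hy1, map_one, one_mul] at m2
    have hAllG : ∀ g : PowerSeries F, g ∈ Gset R (Ideal.span {x, y, z}) x := by
      intro g
      have m1 := Gset.add (Gset.add (Gset.add (hRG _ hxJ _ (hrho g))
        (Gset.smul (hCmem (PowerSeries.coeff (R := F) 1 g)) h1G))
        (Gset.smul (hCmem (PowerSeries.coeff (R := F) 2 g)) h2G))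
        (Gset.smul (hCmem (PowerSeries.coeff (R := F) 5 g)) h5G)
      rwa [show (g - PowerSeries.C (R := F) (PowerSeries.coeff (R := F) 1 g) * PowerSeries.X
          - PowerSeries.C (R := F) (PowerSeries.coeff (R := F) 2 g) * PowerSeries.X ^ 2
          - PowerSeries.C (R := F) (PowerSeries.coeff (R := F) 5 g) * PowerSeries.X ^ 5)
          + PowerSeries.C (R := F) (PowerSeries.coeff (R := F) 1 g) * PowerSeries.X
          + PowerSeries.C (R := F) (PowerSeries.coeff (R := F) 2 g) * PowerSeries.X ^ 2
          + PowerSeries.C (R := F) (PowerSeries.coeff (R := F) 5 g) * PowerSeries.X ^ 5 = g from by ring] at m1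
    have hJI : Ideal.span {x, y, z} ≤ I := by
      rw [Ideal.span_le]
      rintro w hw
      simp only [Set.mem_insert_iff, Set.mem_singleton_iff] at hw
      rcases hw with rfl | rfl | rfl <;> assumption
    have hIJ : I = Ideal.span {x, y, z} := hIeqJ _ hJI (fun g _ => hAllG g)
    have hsurj : ∀ f : PowerSeries F, (∀ i, i < n → PowerSeries.coeff (R := F) i f = 0) →
        ∃ w ∈ I, (↑w : PowerSeries F) = f := by
      intro f hf
      obtain ⟨g, hg⟩ := hdiv f hf
      obtain ⟨w, hwJ, he⟩ := hAllG g
      exact ⟨w, by rw [hIJ]; exact hwJ, by rw [he, ← hg]⟩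
    refine ⟨⟨![x, y, z], ?_⟩, hsurj, h6, ?_⟩
    · have hr : Set.range ![x, y, z] = {x, y, z} := by
        ext w
        simp [Matrix.range_cons, Matrix.range_empty]
        tauto
      rw [hr]
      exact hIJ.symm
    · rintro ⟨v, hv⟩
      have hvI : ∀ i, v i ∈ I := fun i => by rw [← hv]; exact Ideal.subset_span ⟨i, rfl⟩
      have ht : ∀ j : Fin 3, ∃ w ∈ I, (↑w : PowerSeries F) = PowerSeries.X ^ (n + (j : ℕ)) := by
        intro j
        exact hsurj _ (by intro i hi; rw [PowerSeries.coeff_X_pow, if_neg (by omega)])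
      choose t htI hte using ht
      have hcv : ∀ (c : ↥R) (i : Fin 2) (k : ℕ), k ≤ 2 →
          PowerSeries.coeff (R := F) (n + k) ((↑c : PowerSeries F) * ↑(v i))
            = PowerSeries.coeff (R := F) 0 (↑c : PowerSeries F)
              * PowerSeries.coeff (R := F) (n + k) (↑(v i) : PowerSeries F) := by
        intro c i k hk
        rw [coeff_mul_low _ _ (hlow (v i) (hvI i)) k, Finset.sum_eq_single 0]
        · simp
        · intro b hb hb0
          simp only [Finset.mem_range] at hb
          obtain ⟨d1, d2, -⟩ := (hR ↑c).mp c.2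
          have hb12 : b = 1 ∨ b = 2 := by omega
          rcases hb12 with rfl | rfl
          · rw [d1, zero_mul]
          · rw [d2, zero_mul]
        · intro hmem; exact absurd (Finset.mem_range.mpr (by omega)) hmem
      have hcomb : ∀ j : Fin 3, ∃ c : Fin 2 → F,
          (fun k : Fin 3 => if j = k then (1 : F) else 0)
            = ∑ i, c i • (fun k : Fin 3 =>
                PowerSeries.coeff (R := F) (n + (k : ℕ)) (↑(v i) : PowerSeries F)) := by
        intro j
        have hmem : t j ∈ Submodule.span ↥R (Set.range v) := by
          show t j ∈ Ideal.span (Set.range v)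
          rw [hv]; exact htI j
        rw [Submodule.mem_span_range_iff_exists_fun] at hmem
        obtain ⟨c, hc⟩ := hmem
        refine ⟨fun i => PowerSeries.coeff (R := F) 0 (↑(c i) : PowerSeries F), ?_⟩
        funext k
        have hc2 : (PowerSeries.X ^ (n + (j : ℕ)) : PowerSeries F)
            = ∑ i : Fin 2, (↑(c i) : PowerSeries F) * ↑(v i) := by
          rw [← hte j, ← hc]
          calc ((∑ i : Fin 2, c i • v i : ↥R) : PowerSeries F)
              = R.subtype (∑ i : Fin 2, c i • v i) := rfl
            _ = ∑ i : Fin 2, R.subtype (c i • v i) := map_sum _ _ _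
            _ = ∑ i : Fin 2, (↑(c i) : PowerSeries F) * ↑(v i) := by
                refine Finset.sum_congr rfl fun i _ => ?_
                rw [smul_eq_mul, map_mul]
                rfl
        have e2 : PowerSeries.coeff (R := F) (n + (k : ℕ))
            (PowerSeries.X ^ (n + (j : ℕ)) : PowerSeries F) = if j = k then (1 : F) else 0 := by
          rw [PowerSeries.coeff_X_pow]
          by_cases h : j = k
          · subst h; simp
          · rw [if_neg (fun hnk => h (Fin.val_injective
              (show (j : ℕ) = (k : ℕ) by omega))), if_neg h]
        have e1 := congrArg (PowerSeries.coeff (R := F) (n + (k : ℕ))) hc2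
        rw [map_sum] at e1
        simp only [Finset.sum_apply, Pi.smul_apply, smul_eq_mul]
        rw [← e2, e1]
        exact Finset.sum_congr rfl fun i _ => hcv (c i) i (k : ℕ) (by omega)
      have hspan : Submodule.span F (Set.range fun i : Fin 2 => (fun k : Fin 3 =>
          PowerSeries.coeff (R := F) (n + (k : ℕ)) (↑(v i) : PowerSeries F))) = ⊤ := by
        rw [eq_top_iff]
        intro u _
        rw [pi_eq_sum_univ u]
        refine Submodule.sum_mem _ fun j _ => Submodule.smul_mem _ _ ?_
        obtain ⟨c, hc⟩ := hcomb j
        rw [hc]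
        exact Submodule.sum_mem _ fun i _ =>
          Submodule.smul_mem _ _ (Submodule.subset_span ⟨i, rfl⟩)
      have hfr := finrank_le_of_span_eq_top hspan
      rw [Module.finrank_fin_fun, Fintype.card_fin] at hfr
      omega
  
  have caseB : ((¬ ∃ y ∈ I, (↑y : PowerSeries F).order = ((n + 1 : ℕ) : ℕ∞)) ∨
      (¬ ∃ z ∈ I, (↑z : PowerSeries F).order = ((n + 2 : ℕ) : ℕ∞))) →
      ∃ v : Fin 2 → ↥R, Ideal.span (Set.range v) = I := by
    intro hmiss
    by_cases h1 : ∃ y ∈ I, (↑y : PowerSeries F).order = ((n + 1 : ℕ) : ℕ∞)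
    · have h2 : ¬ ∃ z ∈ I, (↑z : PowerSeries F).order = ((n + 2 : ℕ) : ℕ∞) :=
        hmiss.resolve_left (not_not_intro h1)
      obtain ⟨y, hyI, hordy⟩ := h1
      obtain ⟨gy, hgy⟩ := hdiv ↑y (hlow y hyI)
      obtain ⟨hylow, hy1⟩ := hext y hyI gy hgy 1 hordy
      have hgyI : gy ∈ Gset R I x := ⟨y, hyI, hgy⟩
      have hrel : ∀ g, g ∈ Gset R I x →
          PowerSeries.coeff (R := F) 2 g * PowerSeries.coeff (R := F) 1 gy
            = PowerSeries.coeff (R := F) 1 g * PowerSeries.coeff (R := F) 2 gy := by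
        intro g hg
        have hgm : g - PowerSeries.C (R := F) (PowerSeries.coeff (R := F) 0 g)
            - PowerSeries.C (R := F) (PowerSeries.coeff (R := F) 1 g / PowerSeries.coeff (R := F) 1 gy) * gy
            ∈ Gset R I x := Gset.sub (hsubC g hg) (Gset.smul (hCmem _) hgyI)
        have hgy0 : PowerSeries.constantCoeff (R := F) gy = 0 := by
          simpa using hylow 0 (by norm_num)
        have h0 : PowerSeries.coeff (R := F) 0 (g - PowerSeries.C (R := F) (PowerSeries.coeff (R := F) 0 g)
            - PowerSeries.C (R := F) (PowerSeries.coeff (R := F) 1 g / PowerSeries.coeff (R := F) 1 gy) * gy) = 0 := by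
          simp [PowerSeries.coeff_C_mul, PowerSeries.coeff_C, hgy0]
        have h1c : PowerSeries.coeff (R := F) 1 (g - PowerSeries.C (R := F) (PowerSeries.coeff (R := F) 0 g)
            - PowerSeries.C (R := F) (PowerSeries.coeff (R := F) 1 g / PowerSeries.coeff (R := F) 1 gy) * gy) = 0 := by
          simp only [map_sub, PowerSeries.coeff_C_mul, PowerSeries.coeff_C]
          rw [div_mul_cancel₀ _ hy1]
          simp
        have h2c := hNo 2 h2 _ hgm (by
          intro i hi
          interval_cases i
          · exact h0
          · exact h1c)
        simp only [map_sub, PowerSeries.coeff_C_mul, PowerSeries.coeff_C] at h2c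
        norm_num at h2c
        rw [sub_eq_zero] at h2c
        rw [h2c, div_mul_eq_mul_div, div_mul_cancel₀ _ hy1]
      have hxJ : x ∈ Ideal.span {x, y} := Ideal.subset_span (by simp)
      have hyJ : y ∈ Ideal.span {x, y} := Ideal.subset_span (by simp)
      have hgyJ : gy ∈ Gset R (Ideal.span {x, y}) x := ⟨y, hyJ, hgy⟩
      have h5G : (PowerSeries.X ^ 5 : PowerSeries F) ∈ Gset R (Ideal.span {x, y}) x := by
        have hrho5 : PowerSeries.X ^ 4 * gy
            - PowerSeries.C (R := F) (PowerSeries.coeff (R := F) 1 gy) * PowerSeries.X ^ 5 ∈ R := by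
          refine hmemR' _ ?_ ?_ ?_ <;>
            simp [PowerSeries.coeff_X_pow_mul', PowerSeries.coeff_C_mul, PowerSeries.coeff_X_pow]
        have m1 := Gset.sub
          (Gset.smul (hXpow 4 (by norm_num) (by norm_num) (by norm_num)) hgyJ)
          (hRG _ hxJ _ hrho5)
        rw [show PowerSeries.X ^ 4 * gy - (PowerSeries.X ^ 4 * gy
            - PowerSeries.C (R := F) (PowerSeries.coeff (R := F) 1 gy) * PowerSeries.X ^ 5)
            = PowerSeries.C (R := F) (PowerSeries.coeff (R := F) 1 gy) * PowerSeries.X ^ 5 from by ring] at m1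
        have m2 := Gset.smul (hCmem (PowerSeries.coeff (R := F) 1 gy)⁻¹) m1
        rwa [← mul_assoc, ← map_mul, inv_mul_cancel₀ hy1, map_one, one_mul] at m2
      have hqG : PowerSeries.C (R := F) (PowerSeries.coeff (R := F) 1 gy) * PowerSeries.X
          + PowerSeries.C (R := F) (PowerSeries.coeff (R := F) 2 gy) * PowerSeries.X ^ 2
          ∈ Gset R (Ideal.span {x, y}) x := by
        have m1 := Gset.sub (Gset.sub hgyJ (hRG _ hxJ _ (hrho gy)))
          (Gset.smul (hCmem (PowerSeries.coeff (R := F) 5 gy)) h5G)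
        rwa [show gy - (gy - PowerSeries.C (R := F) (PowerSeries.coeff (R := F) 1 gy) * PowerSeries.X
            - PowerSeries.C (R := F) (PowerSeries.coeff (R := F) 2 gy) * PowerSeries.X ^ 2
            - PowerSeries.C (R := F) (PowerSeries.coeff (R := F) 5 gy) * PowerSeries.X ^ 5)
            - PowerSeries.C (R := F) (PowerSeries.coeff (R := F) 5 gy) * PowerSeries.X ^ 5
            = PowerSeries.C (R := F) (PowerSeries.coeff (R := F) 1 gy) * PowerSeries.X
              + PowerSeries.C (R := F) (PowerSeries.coeff (R := F) 2 gy) * PowerSeries.X ^ 2 from by ring] at m1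
      have hJI : Ideal.span {x, y} ≤ I := by
        rw [Ideal.span_le]
        rintro w hw
        simp only [Set.mem_insert_iff, Set.mem_singleton_iff] at hw
        rcases hw with rfl | rfl <;> assumption
      have hIJ : I = Ideal.span {x, y} := by
        refine hIeqJ _ hJI ?_
        intro g hgI
        have m1 := Gset.add (Gset.add (hRG _ hxJ _ (hrho g))
          (Gset.smul (hCmem (PowerSeries.coeff (R := F) 1 g / PowerSeries.coeff (R := F) 1 gy)) hqG))
          (Gset.smul (hCmem (PowerSeries.coeff (R := F) 5 g)) h5G)
        have e1 : PowerSeries.coeff (R := F) 1 g / PowerSeries.coeff (R := F) 1 gy * PowerSeries.coeff (R := F) 1 gy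
            = PowerSeries.coeff (R := F) 1 g := div_mul_cancel₀ _ hy1
        have e2 : PowerSeries.coeff (R := F) 1 g / PowerSeries.coeff (R := F) 1 gy * PowerSeries.coeff (R := F) 2 gy
            = PowerSeries.coeff (R := F) 2 g := by
          rw [div_mul_eq_mul_div, ← hrel g hgI, mul_div_cancel_right₀ _ hy1]
        rwa [show (g - PowerSeries.C (R := F) (PowerSeries.coeff (R := F) 1 g) * PowerSeries.X
            - PowerSeries.C (R := F) (PowerSeries.coeff (R := F) 2 g) * PowerSeries.X ^ 2
            - PowerSeries.C (R := F) (PowerSeries.coeff (R := F) 5 g) * PowerSeries.X ^ 5)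
            + PowerSeries.C (R := F) (PowerSeries.coeff (R := F) 1 g / PowerSeries.coeff (R := F) 1 gy)
              * (PowerSeries.C (R := F) (PowerSeries.coeff (R := F) 1 gy) * PowerSeries.X
                + PowerSeries.C (R := F) (PowerSeries.coeff (R := F) 2 gy) * PowerSeries.X ^ 2)
            + PowerSeries.C (R := F) (PowerSeries.coeff (R := F) 5 g) * PowerSeries.X ^ 5 = g from by
          rw [mul_add, ← mul_assoc, ← mul_assoc, ← map_mul, ← map_mul, e1, e2]; ring] at m1
      refine ⟨![x, y], ?_⟩
      have hr : Set.range ![x, y] = {x, y} := by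
        ext w
        simp [Matrix.range_cons, Matrix.range_empty]
        tauto
      rw [hr]
      exact hIJ.symm
    · -- no element of order n+1
      have hg1 : ∀ g, g ∈ Gset R I x → PowerSeries.coeff (R := F) 1 g = 0 := by
        intro g hg
        have := hNo 1 h1 _ (hsubC g hg) (by
          intro i hi
          interval_cases i
          simp [PowerSeries.coeff_C])
        simpa [PowerSeries.coeff_C] using this
      by_cases h2 : ∃ z ∈ I, (↑z : PowerSeries F).order = ((n + 2 : ℕ) : ℕ∞)
      · obtain ⟨z, hzI, hordz⟩ := h2
        obtain ⟨gz, hgz⟩ := hdiv ↑z (hlow z hzI)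
        obtain ⟨hzlow, hz2⟩ := hext z hzI gz hgz 2 hordz
        have hxJ : x ∈ Ideal.span {x, z} := Ideal.subset_span (by simp)
        have hzJ : z ∈ Ideal.span {x, z} := Ideal.subset_span (by simp)
        obtain ⟨h5G, h2G⟩ := hz_chain (Ideal.span {x, z}) hxJ z hzJ gz hgz
          (hzlow 1 (by norm_num)) hz2
        have hJI : Ideal.span {x, z} ≤ I := by
          rw [Ideal.span_le]
          rintro w hw
          simp only [Set.mem_insert_iff, Set.mem_singleton_iff] at hw
          rcases hw with rfl | rfl <;> assumption
        have hIJ : I = Ideal.span {x, z} := by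
          refine hIeqJ _ hJI ?_
          intro g hgI
          have m1 := Gset.add (Gset.add (hRG _ hxJ _ (hrho g))
            (Gset.smul (hCmem (PowerSeries.coeff (R := F) 2 g)) h2G))
            (Gset.smul (hCmem (PowerSeries.coeff (R := F) 5 g)) h5G)
          rwa [show (g - PowerSeries.C (R := F) (PowerSeries.coeff (R := F) 1 g) * PowerSeries.X
              - PowerSeries.C (R := F) (PowerSeries.coeff (R := F) 2 g) * PowerSeries.X ^ 2
              - PowerSeries.C (R := F) (PowerSeries.coeff (R := F) 5 g) * PowerSeries.X ^ 5)
              + PowerSeries.C (R := F) (PowerSeries.coeff (R := F) 2 g) * PowerSeries.X ^ 2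
              + PowerSeries.C (R := F) (PowerSeries.coeff (R := F) 5 g) * PowerSeries.X ^ 5 = g from by
            rw [hg1 g hgI, map_zero, zero_mul]; ring] at m1
        refine ⟨![x, z], ?_⟩
        have hr : Set.range ![x, z] = {x, z} := by
          ext w
          simp [Matrix.range_cons, Matrix.range_empty]
          tauto
        rw [hr]
        exact hIJ.symm
      · -- no order n+1 nor n+2
        have hg2 : ∀ g, g ∈ Gset R I x → PowerSeries.coeff (R := F) 2 g = 0 := by
          intro g hg
          have := hNo 2 h2 _ (hsubC g hg) (by
            intro i hi
            interval_cases i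
            · simp [PowerSeries.coeff_C]
            · exact hg1 _ (hsubC g hg))
          simpa [PowerSeries.coeff_C] using this
        by_cases h5 : ∃ w ∈ I, (↑w : PowerSeries F).order = ((n + 5 : ℕ) : ℕ∞)
        · obtain ⟨w5, hw5I, hordw5⟩ := h5
          obtain ⟨g5, hg5eq⟩ := hdiv ↑w5 (hlow w5 hw5I)
          obtain ⟨h5low, h5ne⟩ := hext w5 hw5I g5 hg5eq 5 hordw5
          have hxJ : x ∈ Ideal.span {x, w5} := Ideal.subset_span (by simp)
          have hw5J : w5 ∈ Ideal.span {x, w5} := Ideal.subset_span (by simp)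
          have hg5J : g5 ∈ Gset R (Ideal.span {x, w5}) x := ⟨w5, hw5J, hg5eq⟩
          have h5G : (PowerSeries.X ^ 5 : PowerSeries F) ∈ Gset R (Ideal.span {x, w5}) x := by
            have hrho5 : g5 - PowerSeries.C (R := F) (PowerSeries.coeff (R := F) 5 g5) * PowerSeries.X ^ 5
                ∈ R := by
              refine hmemR' _ ?_ ?_ ?_ <;>
                simp [PowerSeries.coeff_C_mul, PowerSeries.coeff_X_pow,
                  h5low 1 (by norm_num), h5low 2 (by norm_num)]
            have m1 := Gset.sub hg5J (hRG _ hxJ _ hrho5)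
            rw [show g5 - (g5 - PowerSeries.C (R := F) (PowerSeries.coeff (R := F) 5 g5) * PowerSeries.X ^ 5)
                = PowerSeries.C (R := F) (PowerSeries.coeff (R := F) 5 g5) * PowerSeries.X ^ 5 from by ring] at m1
            have m2 := Gset.smul (hCmem (PowerSeries.coeff (R := F) 5 g5)⁻¹) m1
            rwa [← mul_assoc, ← map_mul, inv_mul_cancel₀ h5ne, map_one, one_mul] at m2
          have hJI : Ideal.span {x, w5} ≤ I := by
            rw [Ideal.span_le]
            rintro w hw
            simp only [Set.mem_insert_iff, Set.mem_singleton_iff] at hw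
            rcases hw with rfl | rfl <;> assumption
          have hIJ : I = Ideal.span {x, w5} := by
            refine hIeqJ _ hJI ?_
            intro g hgI
            have m1 := Gset.add (hRG _ hxJ _ (hrho g))
              (Gset.smul (hCmem (PowerSeries.coeff (R := F) 5 g)) h5G)
            rwa [show (g - PowerSeries.C (R := F) (PowerSeries.coeff (R := F) 1 g) * PowerSeries.X
                - PowerSeries.C (R := F) (PowerSeries.coeff (R := F) 2 g) * PowerSeries.X ^ 2
                - PowerSeries.C (R := F) (PowerSeries.coeff (R := F) 5 g) * PowerSeries.X ^ 5)
                + PowerSeries.C (R := F) (PowerSeries.coeff (R := F) 5 g) * PowerSeries.X ^ 5 = g from by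
              rw [hg1 g hgI, hg2 g hgI, map_zero, zero_mul, zero_mul]; ring] at m1
          refine ⟨![x, w5], ?_⟩
          have hr : Set.range ![x, w5] = {x, w5} := by
            ext w
            simp [Matrix.range_cons, Matrix.range_empty]
            tauto
          rw [hr]
          exact hIJ.symm
        · -- I is principal
          have hg5 : ∀ g, g ∈ Gset R I x → PowerSeries.coeff (R := F) 5 g = 0 := by
            intro g hg
            have hmem3 : PowerSeries.C (R := F) (PowerSeries.coeff (R := F) 3 g) * PowerSeries.X ^ 3 ∈ R :=
              R.mul_mem (hCmem _) (hXpow 3 (by norm_num) (by norm_num) (by norm_num))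
            have hmem4 : PowerSeries.C (R := F) (PowerSeries.coeff (R := F) 4 g) * PowerSeries.X ^ 4 ∈ R :=
              R.mul_mem (hCmem _) (hXpow 4 (by norm_num) (by norm_num) (by norm_num))
            have hg' : g - PowerSeries.C (R := F) (PowerSeries.coeff (R := F) 0 g)
                - PowerSeries.C (R := F) (PowerSeries.coeff (R := F) 3 g) * PowerSeries.X ^ 3
                - PowerSeries.C (R := F) (PowerSeries.coeff (R := F) 4 g) * PowerSeries.X ^ 4 ∈ Gset R I x :=
              Gset.sub (Gset.sub (hsubC g hg) (hRG I hxI _ hmem3)) (hRG I hxI _ hmem4)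
            have h1' : PowerSeries.coeff (R := F) 1 (g - PowerSeries.C (R := F) (PowerSeries.coeff (R := F) 0 g)
                - PowerSeries.C (R := F) (PowerSeries.coeff (R := F) 3 g) * PowerSeries.X ^ 3
                - PowerSeries.C (R := F) (PowerSeries.coeff (R := F) 4 g) * PowerSeries.X ^ 4) = 0 :=
              hg1 _ hg'
            have h2' : PowerSeries.coeff (R := F) 2 (g - PowerSeries.C (R := F) (PowerSeries.coeff (R := F) 0 g)
                - PowerSeries.C (R := F) (PowerSeries.coeff (R := F) 3 g) * PowerSeries.X ^ 3
                - PowerSeries.C (R := F) (PowerSeries.coeff (R := F) 4 g) * PowerSeries.X ^ 4) = 0 :=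
              hg2 _ hg'
            have h5' := hNo 5 h5 _ hg' (by
              intro i hi
              interval_cases i
              · simp [PowerSeries.coeff_C, PowerSeries.coeff_C_mul, PowerSeries.coeff_X_pow]
              · exact h1'
              · exact h2'
              · simp [PowerSeries.coeff_C, PowerSeries.coeff_C_mul, PowerSeries.coeff_X_pow]
              · simp [PowerSeries.coeff_C, PowerSeries.coeff_C_mul, PowerSeries.coeff_X_pow])
            simpa [PowerSeries.coeff_C, PowerSeries.coeff_C_mul, PowerSeries.coeff_X_pow]
              using h5'
          have hxJ : x ∈ Ideal.span ({x} : Set ↥R) := Ideal.subset_span rfl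
          have hJI : Ideal.span ({x} : Set ↥R) ≤ I := by
            rw [Ideal.span_le]
            rintro w hw
            simp only [Set.mem_singleton_iff] at hw
            subst hw; exact hxI
          have hIJ : I = Ideal.span ({x} : Set ↥R) := by
            refine hIeqJ _ hJI ?_
            intro g hgI
            exact hRG _ hxJ g (hmemR' g (hg1 g hgI) (hg2 g hgI) (hg5 g hgI))
          refine ⟨![x, x], ?_⟩
          have hr : Set.range ![x, x] = ({x} : Set ↥R) := by
            ext w
            simp [Matrix.range_cons, Matrix.range_empty]
          rw [hr]
          exact hIJ.symm
  -- final assembly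
  by_cases h1 : ∃ y ∈ I, (↑y : PowerSeries F).order = ((n + 1 : ℕ) : ℕ∞)
  · by_cases h2 : ∃ z ∈ I, (↑z : PowerSeries F).order = ((n + 2 : ℕ) : ℕ∞)
    · obtain ⟨hgen3, hsurj, h6, hno2⟩ := caseA h1 h2
      have hmug : mug I = 3 := mug_eq_three hgen3 hno2
      refine ⟨le_of_eq hmug, ⟨fun _ => ⟨⟨x, hxI, hordx⟩, h1, h2⟩, fun _ => hmug⟩,
        fun _ => ⟨?_, ?_, h6⟩⟩
      · intro f hf
        rw [Ideal.mem_span_singleton] at hf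
        exact hsurj f (PowerSeries.X_pow_dvd_iff.mp hf)
      · refine le_antisymm Ideal.le_comap_map ?_
        intro w hw
        rw [Ideal.mem_comap, hmap, Ideal.mem_span_singleton] at hw
        obtain ⟨w', hw', he⟩ := hsurj _ (PowerSeries.X_pow_dvd_iff.mp hw)
        have hww : w' = w := Subtype.ext he
        rwa [← hww]
    · obtain ⟨v, hv⟩ := caseB (Or.inr h2)
      have hle := mug_le_of v hv
      refine ⟨by omega, ⟨fun h => absurd h (by omega), ?_⟩, fun h => absurd h (by omega)⟩
      rintro ⟨-, -, hz'⟩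
      exact absurd hz' h2
  · obtain ⟨v, hv⟩ := caseB (Or.inl h1)
    have hle := mug_le_of v hv
    refine ⟨by omega, ⟨fun h => absurd h (by omega), ?_⟩, fun h => absurd h (by omega)⟩
    rintro ⟨-, hy', -⟩
    exact absurd hy' h1
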